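/- Let R be a commutative ring, 𝔭 a prime ideal, and E(R/𝔭) the injective envelope of R/𝔭. Then for every R-module M there is a natural isomorphism Hom_R(M, κ(𝔭)) ≅ Hom_{R_𝔭}(M ⊗_R κ(𝔭), E(R/𝔭)), where κ(𝔭) is the residue field at 𝔭. -/

import Mathlib

open TensorProduct

universe u v

set_option linter.unusedSectionVars false
set_option maxHeartbeats 1000000
section Aux
variable {R : Type u} [CommRing R] (p : Ideal R) [p.IsPrime]
  (E : Type u) [AddCommGroup E] [Module (Localization.AtPrime p) E]
  [Module R E] [IsScalarTower R (Localization.AtPrime p) E]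
  (ι : IsLocalRing.ResidueField (Localization.AtPrime p) →ₗ[Localization.AtPrime p] E)
  (M : Type u) [AddCommGroup M] [Module R M]

noncomputable def stmt4Bil (f : M →ₗ[R] IsLocalRing.ResidueField (Localization.AtPrime p)) :
    IsLocalRing.ResidueField (Localization.AtPrime p) →ₗ[R] M →ₗ[R] E :=
  LinearMap.mk₂ R (fun c m => ι (c * f m))
    (fun c c' m => by simp [add_mul])
    (fun r c m => by show ι ((r • c) * f m) = r • ι (c * f m); rw [smul_mul_assoc, ι.map_smul_of_tower])
    (fun c m m' => by simp [mul_add])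
    (fun r c m => by show ι (c * f (r • m)) = r • ι (c * f m); rw [map_smul, mul_smul_comm, ι.map_smul_of_tower])

noncomputable def stmt4F (f : M →ₗ[R] IsLocalRing.ResidueField (Localization.AtPrime p)) :
    (IsLocalRing.ResidueField (Localization.AtPrime p) ⊗[R] M) →ₗ[Localization.AtPrime p] E :=
  LinearMap.extendScalarsOfIsLocalization p.primeCompl (Localization.AtPrime p)
    (TensorProduct.lift (stmt4Bil p E ι M f))

@[simp] lemma stmt4F_apply (f : M →ₗ[R] IsLocalRing.ResidueField (Localization.AtPrime p))
    (c : IsLocalRing.ResidueField (Localization.AtPrime p)) (m : M) :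
    stmt4F p E ι M f (c ⊗ₜ m) = ι (c * f m) := rfl

lemma stmt4_ext {g h : (IsLocalRing.ResidueField (Localization.AtPrime p) ⊗[R] M)
      →ₗ[Localization.AtPrime p] E}
    (H : ∀ c m, g (c ⊗ₜ m) = h (c ⊗ₜ m)) : g = h := by
  refine LinearMap.ext fun x => ?_
  induction x using TensorProduct.induction_on with
  | zero => simp
  | tmul c m => exact H c m
  | add x y hx hy => simp [map_add, hx, hy]

noncomputable def stmt4Fₗ :
    (M →ₗ[R] IsLocalRing.ResidueField (Localization.AtPrime p)) →ₗ[R]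
      ((IsLocalRing.ResidueField (Localization.AtPrime p) ⊗[R] M)
        →ₗ[Localization.AtPrime p] E) where
  toFun := stmt4F p E ι M
  map_add' f g := stmt4_ext p E M (fun c m => by
    simp [mul_add, map_add])
  map_smul' r f := stmt4_ext p E M (fun c m => by
    show ι (c * (r • f) m) = r • ι (c * f m)
    rw [LinearMap.smul_apply, mul_smul_comm, ι.map_smul_of_tower])

@[simp] lemma stmt4Fₗ_apply (f : M →ₗ[R] IsLocalRing.ResidueField (Localization.AtPrime p))
    (c : IsLocalRing.ResidueField (Localization.AtPrime p)) (m : M) :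
    stmt4Fₗ p E ι M f (c ⊗ₜ m) = ι (c * f m) := rfl

-- every element annihilated by the maximal ideal lies in the range of ι
lemma stmt4_mem_range (hess : ∀ N : Submodule (Localization.AtPrime p) E, N ≠ ⊥ →
      N ⊓ LinearMap.range ι ≠ ⊥)
    (v : E) (hv : ∀ r ∈ IsLocalRing.maximalIdeal (Localization.AtPrime p), r • v = 0) :
    v ∈ LinearMap.range ι := by
  by_cases h0 : v = 0
  · simp [h0]
  have hN : (Submodule.span (Localization.AtPrime p) {v}) ≠ ⊥ := by
    simpa [Submodule.span_singleton_eq_bot] using h0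
  obtain ⟨w, hw, hw0⟩ := (Submodule.ne_bot_iff _).1 (hess _ hN)
  obtain ⟨hw1, hw2⟩ := Submodule.mem_inf.1 hw
  obtain ⟨r, rfl⟩ := Submodule.mem_span_singleton.1 hw1
  have hr : IsUnit r := by
    by_contra hr
    exact hw0 (hv r ((IsLocalRing.mem_maximalIdeal r).2 hr))
  obtain ⟨u, rfl⟩ := hr
  have := Submodule.smul_mem (LinearMap.range ι) (↑u⁻¹ : Localization.AtPrime p) hw2
  rwa [smul_smul, Units.inv_mul, one_smul] at this
end Aux

/-- for a commutative ring `R`, a prime `𝔭`, and the injective envelope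
`E = E(R/𝔭)` of the residue field `κ(𝔭)` over `R_𝔭` (encoded as an injective `R_𝔭`-module
together with an essential embedding `ι : κ(𝔭) → E`), for every `R`-module `M` there is a
natural isomorphism `Hom_R(M, κ(𝔭)) ≅ Hom_{R_𝔭}(M ⊗_R κ(𝔭), E)`, determined by
`f ↦ (c ⊗ m ↦ ι (c * f m))`. -/
theorem stmt4 {R : Type u} [CommRing R] (p : Ideal R) [p.IsPrime]
    (E : Type u) [AddCommGroup E] [Module (Localization.AtPrime p) E]
    [Module R E] [IsScalarTower R (Localization.AtPrime p) E]
    [Module.Injective (Localization.AtPrime p) E]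
    (ι : IsLocalRing.ResidueField (Localization.AtPrime p)
      →ₗ[Localization.AtPrime p] E)
    (hι : Function.Injective ι)
    -- `ι` is an essential extension: `E` is an injective envelope of `κ(𝔭) = E(R/𝔭)`
    (hess : ∀ N : Submodule (Localization.AtPrime p) E, N ≠ ⊥ →
      N ⊓ LinearMap.range ι ≠ ⊥)
    (M : Type u) [AddCommGroup M] [Module R M] :
    ∃ e : (M →ₗ[R] IsLocalRing.ResidueField (Localization.AtPrime p)) ≃ₗ[R]
        ((IsLocalRing.ResidueField (Localization.AtPrime p) ⊗[R] M)
          →ₗ[Localization.AtPrime p] E),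
      ∀ (f : M →ₗ[R] IsLocalRing.ResidueField (Localization.AtPrime p))
        (c : IsLocalRing.ResidueField (Localization.AtPrime p)) (m : M),
        e f (c ⊗ₜ m) = ι (c * f m) := by
  classical
  -- injectivity
  have hinj : Function.Injective (stmt4Fₗ p E ι M) := by
    rw [injective_iff_map_eq_zero]
    intro f hf
    ext m
    apply hι
    have h := congrArg (fun gg => gg ((1 : IsLocalRing.ResidueField (Localization.AtPrime p)) ⊗ₜ[R] m)) hf
    simp only [stmt4Fₗ_apply, LinearMap.zero_apply, one_mul] at h
    simp only [LinearMap.zero_apply, map_zero]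
    exact h
  -- surjectivity
  have hsurj : Function.Surjective (stmt4Fₗ p E ι M) := by
    intro g
    -- elements in the image of g are annihilated by the maximal ideal
    have hann : ∀ (x : IsLocalRing.ResidueField (Localization.AtPrime p) ⊗[R] M) (r : Localization.AtPrime p), r ∈ IsLocalRing.maximalIdeal (Localization.AtPrime p) →
        r • g x = 0 := by
      intro x r hr
      rw [← map_smul]
      have hx : r • x = 0 := by
        induction x using TensorProduct.induction_on with
        | zero => simp
        | tmul c m =>
          rw [smul_tmul']
          have : r • c = 0 := by
            rw [Algebra.smul_def]
            have : algebraMap (Localization.AtPrime p) (IsLocalRing.ResidueField (Localization.AtPrime p)) r = 0 := by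
              exact Ideal.Quotient.eq_zero_iff_mem.2 hr
            rw [this, zero_mul]
          rw [this, zero_tmul]
        | add x y hx hy => rw [smul_add, hx, hy, add_zero]
      rw [hx, map_zero]
    have hmem : ∀ m : M, g ((1 : IsLocalRing.ResidueField (Localization.AtPrime p)) ⊗ₜ m) ∈ LinearMap.range ι := by
      intro m
      exact stmt4_mem_range p E ι hess _ (fun r hr => hann _ r hr)
    choose f0 hf0 using fun m => hmem m
    -- the key computation
    have key : ∀ (c : IsLocalRing.ResidueField (Localization.AtPrime p)) (m : M), g (c ⊗ₜ m) = ι (c * f0 m) := by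
      intro c m
      obtain ⟨r, rfl⟩ := Ideal.Quotient.mk_surjective c
      have h1 : (Ideal.Quotient.mk (IsLocalRing.maximalIdeal (Localization.AtPrime p)) r : IsLocalRing.ResidueField (Localization.AtPrime p)) ⊗ₜ[R] m
          = r • ((1 : IsLocalRing.ResidueField (Localization.AtPrime p)) ⊗ₜ[R] m) := by
        rw [smul_tmul', Algebra.smul_def, mul_one]
        rfl
      erw [h1]; rw [map_smul, ← hf0, ← map_smul, Algebra.smul_def]
      rfl
    have hadd : ∀ m m', f0 (m + m') = f0 m + f0 m' := by
      intro m m'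
      apply hι
      rw [map_add, hf0, hf0, hf0, ← map_add, tmul_add]
    have hsmul : ∀ (r : R) (m : M), f0 (r • m) = r • f0 m := by
      intro r m
      apply hι
      rw [hf0, ι.map_smul_of_tower, hf0, tmul_smul, g.map_smul_of_tower]
    refine ⟨{ toFun := f0, map_add' := hadd, map_smul' := hsmul }, ?_⟩
    refine stmt4_ext p E M fun c m => ?_
    rw [stmt4Fₗ_apply, key]
    rfl
  refine ⟨LinearEquiv.ofBijective (stmt4Fₗ p E ι M) ⟨hinj, hsurj⟩, fun f c m => rfl⟩
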